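/- Let H be the polynomial Hopf algebra ℚ[Q₁, Q₂, ...] graded with deg Qᵢ = dᵢ and each Qᵢ primitive. An element x of degree m ≥ d is a near-primitive of order d if and only if x lies in the span of monomials in the Qᵢ all of whose proper monomial factors have degree strictly less than d; equivalently, the degree-m component of the space of order-d near-primitives equals the degree-m part of ℚ[Qᵢ : m − d < dᵢ < d] ⊕ ℚ·{primitives of degree m}. -/

import Mathlib

/- Classification of near-primitives in the polynomial Hopf algebra
H = ℚ[Q₁, Q₂, ...] on primitive generators `X i` of positive degrees `w i`.
A homogeneous element x of degree m ≥ d is a near-primitive of order d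
(meaning Δ(x) − 1 ⊗ x lies in H ⊗ H^{<d}) iff x lies in the span of the
degree-m monomials all of whose proper monomial factors have degree < d. -/

open MvPolynomial TensorProduct

noncomputable section

abbrev H : Type := MvPolynomial ℕ ℚ

def comulP : H →ₐ[ℚ] H ⊗[ℚ] H := aeval fun i => X i ⊗ₜ[ℚ] 1 + 1 ⊗ₜ[ℚ] X i

def D (w : ℕ → ℕ) (f : ℕ →₀ ℕ) : ℕ := f.sum fun i e => w i * e

/-- The subspace H ⊗ H^{<d} of the tensor square. -/
def TL (w : ℕ → ℕ) (d : ℕ) : Submodule ℚ (H ⊗[ℚ] H) :=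
  Submodule.span ℚ {t | ∃ a b : H, (∃ m < d, IsWeightedHomogeneous w b m) ∧ t = a ⊗ₜ[ℚ] b}

/-- x is a near-primitive of order d: (id ⊗ proj_{≥d})Δ(x) = 1 ⊗ x, i.e.
Δ(x) − 1 ⊗ x ∈ H ⊗ H^{<d}. -/
def NearPrim (w : ℕ → ℕ) (d : ℕ) (x : H) : Prop := comulP x - 1 ⊗ₜ[ℚ] x ∈ TL w d

/-- multinomial-type coefficient -/
def Bc (f g : ℕ →₀ ℕ) : ℕ := ∏ i ∈ f.support, (f i).choose (g i)

lemma Bc_pos {f g : ℕ →₀ ℕ} (h : g ≤ f) : 0 < Bc f g :=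
  Finset.prod_pos fun i _ => Nat.choose_pos (h i)

lemma Bc_zero (f : ℕ →₀ ℕ) : Bc f 0 = 1 := by
  simp [Bc]

lemma comulP_monomial (f : ℕ →₀ ℕ) :
    comulP (monomial f (1:ℚ)) =
      ∑ p ∈ Finset.HasAntidiagonal.antidiagonal f,
        (Bc f p.1 : ℚ) • ((monomial p.1 (1:ℚ)) ⊗ₜ[ℚ] (monomial p.2 (1:ℚ))) := by
  induction f using Finsupp.induction with
  | zero =>
      simp [Bc, Algebra.TensorProduct.one_def]
  | single_add i e f hif he ih =>
      have hfi : f i = 0 := Finsupp.notMem_support_iff.mp hif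
      have hX : comulP (X i) = (X i ⊗ₜ[ℚ] (1:H) + (1:H) ⊗ₜ[ℚ] X i) := aeval_X _ _
      have hcomm : Commute ((X i : H) ⊗ₜ[ℚ] (1:H)) ((1:H) ⊗ₜ[ℚ] (X i : H)) := by
        simp [Commute, SemiconjBy, Algebra.TensorProduct.tmul_mul_tmul]
      rw [monomial_single_add, map_mul, map_pow, hX, hcomm.add_pow, ih,
        Finset.sum_mul_sum]
      have step : ∀ k ∈ Finset.range (e+1), ∀ p ∈ Finset.HasAntidiagonal.antidiagonal f,
          ((X i ⊗ₜ[ℚ] (1:H))^k * ((1:H) ⊗ₜ[ℚ] X i)^(e-k) * ((e.choose k : ℕ) : H ⊗[ℚ] H)) *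
            ((Bc f p.1 : ℚ) • ((monomial p.1 (1:ℚ)) ⊗ₜ[ℚ] (monomial p.2 (1:ℚ)))) =
          ((e.choose k * Bc f p.1 : ℕ) : ℚ) •
            ((monomial (Finsupp.single i k + p.1) (1:ℚ)) ⊗ₜ[ℚ]
              (monomial (Finsupp.single i (e-k) + p.2) (1:ℚ))) := by
        intro k _ p _
        rw [Algebra.TensorProduct.tmul_pow, Algebra.TensorProduct.tmul_pow, one_pow, one_pow,
          Algebra.TensorProduct.tmul_mul_tmul, one_mul, mul_one, mul_smul_comm,
          monomial_single_add, monomial_single_add, mul_right_comm,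
          Algebra.TensorProduct.tmul_mul_tmul, mul_comm _ ((e.choose k : ℕ) : H ⊗[ℚ] H),
          ← nsmul_eq_mul, ← Nat.cast_smul_eq_nsmul ℚ, smul_smul]
        congr 1
        push_cast
        ring
      rw [Finset.sum_congr rfl (fun k hk => Finset.sum_congr rfl (fun p hp => step k hk p hp))]
      rw [← Finset.sum_product']
      refine Finset.sum_nbij'
        (i := fun q => (Finsupp.single i q.1 + q.2.1, Finsupp.single i (e - q.1) + q.2.2))
        (j := fun p => (p.1 i, (p.1.erase i, p.2.erase i))) ?_ ?_ ?_ ?_ ?_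
      · rintro ⟨k, a, b⟩ hq
        simp only [Finset.mem_product, Finset.mem_range, Finset.HasAntidiagonal.mem_antidiagonal] at hq
        obtain ⟨hk, hab⟩ := hq
        rw [Finset.HasAntidiagonal.mem_antidiagonal]
        rw [add_add_add_comm, ← Finsupp.single_add,
          Nat.add_sub_cancel' (Nat.lt_succ_iff.mp hk), hab]
      · rintro ⟨g, h⟩ hq
        rw [Finset.HasAntidiagonal.mem_antidiagonal] at hq
        simp only [Finset.mem_product, Finset.mem_range, Finset.HasAntidiagonal.mem_antidiagonal]
        constructor
        · have h1 : g i + h i = e + f i := by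
            have := DFunLike.congr_fun hq i
            simpa [Finsupp.add_apply, Finsupp.single_eq_same] using this
          omega
        · rw [← Finsupp.erase_add, hq, Finsupp.erase_add, Finsupp.erase_single,
            Finsupp.erase_of_notMem_support hif, zero_add]
      · rintro ⟨k, a, b⟩ hq
        simp only [Finset.mem_product, Finset.mem_range, Finset.HasAntidiagonal.mem_antidiagonal] at hq
        obtain ⟨hk, hab⟩ := hq
        have hai : a i = 0 := by
          have := DFunLike.congr_fun hab i
          simp only [Finsupp.add_apply] at this
          omega
        have hbi : b i = 0 := by
          have := DFunLike.congr_fun hab i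
          simp only [Finsupp.add_apply] at this
          omega
        have ea : (Finsupp.single i k + a).erase i = a := by
          rw [Finsupp.erase_add, Finsupp.erase_single, zero_add,
            Finsupp.erase_of_notMem_support (Finsupp.notMem_support_iff.mpr hai)]
        have eb : (Finsupp.single i (e-k) + b).erase i = b := by
          rw [Finsupp.erase_add, Finsupp.erase_single, zero_add,
            Finsupp.erase_of_notMem_support (Finsupp.notMem_support_iff.mpr hbi)]
        refine Prod.ext ?_ (Prod.ext ?_ ?_)
        · show (Finsupp.single i k + a) i = k
          rw [Finsupp.add_apply, Finsupp.single_eq_same, hai, add_zero]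
        · exact ea
        · exact eb
      · rintro ⟨g, h⟩ hq
        rw [Finset.HasAntidiagonal.mem_antidiagonal] at hq
        have hgi : g i + h i = e := by
          have h1 : g i + h i = e + f i := by
            have := DFunLike.congr_fun hq i
            simpa [Finsupp.add_apply, Finsupp.single_eq_same] using this
          omega
        refine Prod.ext ?_ ?_
        · show Finsupp.single i (g i) + g.erase i = g
          exact Finsupp.single_add_erase i g
        · show Finsupp.single i (e - g i) + h.erase i = h
          have h2 : e - g i = h i := by omega
          rw [h2]
          exact Finsupp.single_add_erase i h
      · rintro ⟨k, a, b⟩ hq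
        simp only [Finset.mem_product, Finset.mem_range, Finset.HasAntidiagonal.mem_antidiagonal] at hq
        obtain ⟨hk, hab⟩ := hq
        have hai : a i = 0 := by
          have := DFunLike.congr_fun hab i
          simp only [Finsupp.add_apply] at this
          omega
        congr 1
        have hBc : Bc (Finsupp.single i e + f) (Finsupp.single i k + a) =
            e.choose k * Bc f a := by
          have hsupp : (Finsupp.single i e + f).support = insert i f.support := by
            rw [Finsupp.support_add_eq]
            · rw [Finsupp.support_single_ne_zero _ he]
              rfl
            · rw [Finsupp.support_single_ne_zero _ he]
              simp [Finset.disjoint_singleton_left, hif]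
          rw [Bc, hsupp, Finset.prod_insert hif]
          congr 1
          · simp [Finsupp.add_apply, Finsupp.single_eq_same, hfi, hai]
          · refine Finset.prod_congr rfl fun j hj => ?_
            have hji : j ≠ i := fun hh => hif (hh ▸ hj)
            simp [Finsupp.add_apply, Finsupp.single_eq_of_ne hji]
        rw [hBc]


lemma weight_eq_D (w : ℕ → ℕ) (f : ℕ →₀ ℕ) : Finsupp.weight w f = D w f := by
  rw [Finsupp.weight_apply, D]
  exact Finsupp.sum_congr fun i _ => mul_comm _ _

def phi (g h : ℕ →₀ ℕ) : (H ⊗[ℚ] H) →ₗ[ℚ] ℚ :=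
  (TensorProduct.lid ℚ ℚ).toLinearMap ∘ₗ TensorProduct.map (lcoeff ℚ g) (lcoeff ℚ h)

lemma phi_tmul (g h : ℕ →₀ ℕ) (a b : H) : phi g h (a ⊗ₜ[ℚ] b) = coeff g a * coeff h b := by
  simp [phi, lcoeff, smul_eq_mul]

lemma phi_TL {w : ℕ → ℕ} {d : ℕ} {g h : ℕ →₀ ℕ} (hh : d ≤ D w h) {t : H ⊗[ℚ] H}
    (ht : t ∈ TL w d) : phi g h t = 0 := by
  refine Submodule.span_induction ?_ ?_ ?_ ?_ ht
  · rintro t ⟨a, b, ⟨m', hm', hb⟩, rfl⟩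
    rw [phi_tmul]
    have hcb : coeff h b = 0 := by
      by_contra hc
      have h2 := hb hc
      rw [weight_eq_D] at h2
      omega
    rw [hcb, mul_zero]
  · simp
  · intro x y _ _ hx hy; rw [map_add, hx, hy, add_zero]
  · intro c x _ hx; rw [map_smul, hx, smul_zero]

lemma phi_comul_monomial (g h f : ℕ →₀ ℕ) :
    phi g h (comulP (monomial f (1:ℚ))) = if g + h = f then (Bc f g : ℚ) else 0 := by
  rw [comulP_monomial, map_sum]
  simp only [map_smul, phi_tmul, coeff_monomial]
  have hcong : ∀ p ∈ Finset.HasAntidiagonal.antidiagonal f,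
      (Bc f p.1 : ℚ) • ((if p.1 = g then (1:ℚ) else 0) * (if p.2 = h then (1:ℚ) else 0)) =
      if p = (g, h) then (Bc f g : ℚ) else 0 := by
    rintro ⟨a, b⟩ _
    by_cases h1 : a = g <;> by_cases h2 : b = h <;>
      simp [h1, h2, Prod.ext_iff]
  rw [Finset.sum_congr rfl hcong, Finset.sum_ite_eq' (Finset.HasAntidiagonal.antidiagonal f) (g, h)]
  simp only [Finset.HasAntidiagonal.mem_antidiagonal]


theorem near_primitive_classification (w : ℕ → ℕ) (hw : ∀ i, 0 < w i)
    (d m : ℕ) (hd : 1 ≤ d) (hm : d ≤ m) (x : H) (hx : IsWeightedHomogeneous w x m) :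
    NearPrim w d x ↔
      x ∈ Submodule.span ℚ {q : H | ∃ f : ℕ →₀ ℕ, q = monomial f 1 ∧ D w f = m ∧
        ∀ g : ℕ →₀ ℕ, g ≤ f → g ≠ 0 → g ≠ f → D w g < d} := by
  have hrepr : x = ∑ f ∈ x.support, (coeff f x) • (monomial f (1:ℚ)) := by
    conv_lhs => rw [← x.support_sum_monomial_coeff]
    exact Finset.sum_congr rfl fun f _ => by rw [smul_monomial, smul_eq_mul, mul_one]
  constructor
  · intro hNP
    rw [hrepr]
    refine Submodule.sum_mem _ fun f hf => Submodule.smul_mem _ _ (Submodule.subset_span ?_)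
    refine ⟨f, rfl, ?_, ?_⟩
    · have h1 := hx (mem_support_iff.mp hf)
      rw [weight_eq_D] at h1
      exact h1
    · intro g hg hg0 hgf
      by_contra hge
      push_neg at hge
      set k := f - g with hk
      have hkg : k + g = f := tsub_add_cancel_of_le hg
      have hk0 : k ≠ 0 := by
        intro h0
        exact hgf (by rw [← hkg, h0, zero_add])
      have h1 : phi k g (comulP x - 1 ⊗ₜ[ℚ] x) = 0 := phi_TL hge hNP
      rw [map_sub] at h1
      have h2 : phi k g ((1:H) ⊗ₜ[ℚ] x) = 0 := by
        rw [phi_tmul, coeff_one, if_neg (fun hh => hk0 hh.symm), zero_mul]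
      have h3 : phi k g (comulP x) = coeff f x * Bc f k := by
        conv_lhs => rw [hrepr]
        rw [map_sum, map_sum]
        simp only [map_smul, phi_comul_monomial, smul_eq_mul]
        rw [Finset.sum_eq_single f]
        · rw [if_pos hkg]
        · intro b _ hbf
          rw [if_neg (fun hh => hbf ((hkg.symm.trans hh).symm)), mul_zero]
        · intro hfn
          exact absurd hf hfn
      rw [h3, h2, sub_zero] at h1
      have hc0 : coeff f x ≠ 0 := mem_support_iff.mp hf
      have hpos : (0:ℚ) < Bc f k := by
        exact_mod_cast Bc_pos (hk ▸ tsub_le_self)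
      exact absurd h1 (mul_ne_zero hc0 (ne_of_gt hpos))
  · intro hsp
    show comulP x - 1 ⊗ₜ[ℚ] x ∈ TL w d
    have hL : comulP x - 1 ⊗ₜ[ℚ] x =
        (comulP.toLinearMap - TensorProduct.mk ℚ H H 1) x := by
      simp
    rw [hL]
    revert hsp
    have hle : Submodule.span ℚ {q : H | ∃ f : ℕ →₀ ℕ, q = monomial f 1 ∧ D w f = m ∧
        ∀ g : ℕ →₀ ℕ, g ≤ f → g ≠ 0 → g ≠ f → D w g < d} ≤
        (TL w d).comap (comulP.toLinearMap - TensorProduct.mk ℚ H H 1) := by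
      rw [Submodule.span_le]
      rintro q ⟨f, rfl, hDf, hfac⟩
      simp only [SetLike.mem_coe, Submodule.mem_comap, LinearMap.sub_apply,
        AlgHom.toLinearMap_apply, TensorProduct.mk_apply]
      have h0f : ((0 : ℕ →₀ ℕ), f) ∈ Finset.HasAntidiagonal.antidiagonal f := by
        rw [Finset.HasAntidiagonal.mem_antidiagonal, zero_add]
      rw [comulP_monomial, ← Finset.add_sum_erase _ _ h0f]
      have hterm : (Bc f (0 : ℕ →₀ ℕ) : ℚ) •
          ((monomial (0 : ℕ →₀ ℕ) (1:ℚ)) ⊗ₜ[ℚ] (monomial f (1:ℚ))) =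
          (1:H) ⊗ₜ[ℚ] (monomial f (1:ℚ)) := by
        rw [Bc_zero]
        simp [monomial_zero']
      rw [hterm, add_sub_cancel_left]
      refine Submodule.sum_mem _ fun p hp => Submodule.smul_mem _ _ (Submodule.subset_span ?_)
      rw [Finset.mem_erase, Finset.HasAntidiagonal.mem_antidiagonal] at hp
      obtain ⟨hpne, hpsum⟩ := hp
      refine ⟨monomial p.1 1, monomial p.2 1, ⟨D w p.2, ?_,
        isWeightedHomogeneous_monomial w p.2 1 (weight_eq_D w p.2)⟩, rfl⟩
      have hp1 : p.1 ≠ 0 := by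
        intro h0
        apply hpne
        have : p.2 = f := by rw [← hpsum, h0, zero_add]
        exact Prod.ext h0 this
      have hle2 : p.2 ≤ f := le_iff_exists_add'.mpr ⟨p.1, hpsum.symm⟩
      by_cases h20 : p.2 = 0
      · rw [h20]
        simpa [D] using Nat.lt_of_succ_le hd
      · by_cases h2f : p.2 = f
        · exfalso
          apply hp1
          have := hpsum
          rw [h2f] at this
          exact add_eq_right.mp this
        · exact hfac p.2 hle2 h20 h2f
    exact fun hsp => hle hsp

end
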